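/- Let Λ = {λ ∈ R^{n+1} : λ ≥ 0, Σ_{j=0}^n λ_j = 1} and define the SOS2 region S = ∪_{j=1}^n {λ ∈ Λ : λ_k = 0 for all k ∉ {j−1, j}}. Let {η^{(1)},…,η^{(n)}} ⊆ {0,1}^{⌈log₂ n⌉} be distinct binary vectors such that consecutive vectors η^{(t)}, η^{(t+1)} differ in at most one component (a Gray code), set η^{(0)} = η^{(1)}, η^{(n+1)} = η^{(n)}, and for each k define L_k = {j : η^{(j)}_k = 1 or η^{(j+1)}_k = 1} and R_k = {j : η^{(j)}_k = 0 or η^{(j+1)}_k = 0}. Then λ ∈ S if and only if there exists δ ∈ {0,1}^{⌈log₂ n⌉} with Σ_{j∉L_k} λ_j ≤ δ_k ≤ 1 − Σ_{j∉R_k} λ_j for all k. -/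
import Mathlib


theorem stmt19 {n : ℕ} (hn : 0 < n)
    (Λ : Set (Fin (n+1) → ℝ))
    (hΛ : Λ = {l | (∀ j, 0 ≤ l j) ∧ ∑ j, l j = 1})
    (S : Set (Fin (n+1) → ℝ))
    (hS : S = ⋃ j : Fin n,
      {l ∈ Λ | ∀ k : Fin (n+1), k ≠ j.castSucc → k ≠ j.succ → l k = 0})
    (η : ℕ → Fin (Nat.clog 2 n) → Bool)
    -- η^{(1)},…,η^{(n)} are distinct
    (hdist : ∀ s t : ℕ, 1 ≤ s → s ≤ n → 1 ≤ t → t ≤ n → η s = η t → s = t)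
    -- consecutive vectors differ in at most one component (Gray code)
    (hgray : ∀ t : ℕ, 1 ≤ t → t < n →
      (Finset.univ.filter fun k => η t k ≠ η (t+1) k).card ≤ 1)
    (h0 : η 0 = η 1) (hend : η (n+1) = η n)
    (lam : Fin (n+1) → ℝ) (hlam : lam ∈ Λ) :
    lam ∈ S ↔ ∃ δ : Fin (Nat.clog 2 n) → ℝ, ∀ k,
      (δ k = 0 ∨ δ k = 1) ∧
      (∑ j ∈ Finset.univ.filter
          (fun j : Fin (n+1) => ¬(η (j : ℕ) k = true ∨ η ((j : ℕ) + 1) k = true)),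
        lam j) ≤ δ k ∧
      δ k ≤ 1 - ∑ j ∈ Finset.univ.filter
          (fun j : Fin (n+1) => ¬(η (j : ℕ) k = false ∨ η ((j : ℕ) + 1) k = false)),
        lam j := by
  classical
  obtain ⟨hnn, hsum⟩ : (∀ j, 0 ≤ lam j) ∧ ∑ j, lam j = 1 := by
    rw [hΛ] at hlam; exact hlam
  have hle1 : ∀ (s : Finset (Fin (n+1))), ∑ i ∈ s, lam i ≤ 1 := by
    intro s
    rw [← hsum]
    exact Finset.sum_le_sum_of_subset_of_nonneg (Finset.subset_univ s)
      (fun i _ _ => hnn i)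
  constructor
  · intro hmem
    rw [hS] at hmem
    obtain ⟨j, hlam', hsupp⟩ := Set.mem_iUnion.mp hmem
    refine ⟨fun k => if η ((j : ℕ) + 1) k = true then 0 else 1, fun k => ?_⟩
    by_cases hc : η ((j : ℕ) + 1) k = true
    · beta_reduce
      rw [if_pos hc]
      have hz : ∑ i ∈ Finset.univ.filter
          (fun i : Fin (n+1) => ¬(η (i : ℕ) k = true ∨ η ((i : ℕ) + 1) k = true)),
          lam i = 0 := by
        apply Finset.sum_eq_zero
        intro i hi
        simp only [Finset.mem_filter, not_or] at hi
        obtain ⟨-, h1, h2⟩ := hi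
        refine hsupp i (fun he => ?_) (fun he => ?_)
        · apply h2; rw [he, Fin.coe_castSucc]; exact hc
        · apply h1; rw [he, Fin.val_succ]; exact hc
      refine ⟨Or.inl rfl, le_of_eq hz, ?_⟩
      have := hle1 (Finset.univ.filter
          (fun i : Fin (n+1) => ¬(η (i : ℕ) k = false ∨ η ((i : ℕ) + 1) k = false)))
      linarith
    · beta_reduce
      rw [if_neg hc]
      have hcf : η ((j : ℕ) + 1) k = false := by
        revert hc; cases η ((j : ℕ) + 1) k <;> simp
      have hz : ∑ i ∈ Finset.univ.filter
          (fun i : Fin (n+1) => ¬(η (i : ℕ) k = false ∨ η ((i : ℕ) + 1) k = false)),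
          lam i = 0 := by
        apply Finset.sum_eq_zero
        intro i hi
        simp only [Finset.mem_filter, not_or] at hi
        obtain ⟨-, h1, h2⟩ := hi
        refine hsupp i (fun he => ?_) (fun he => ?_)
        · apply h2; rw [he, Fin.coe_castSucc]; exact hcf
        · apply h1; rw [he, Fin.val_succ]; exact hcf
      have := hle1 (Finset.univ.filter
          (fun i : Fin (n+1) => ¬(η (i : ℕ) k = true ∨ η ((i : ℕ) + 1) k = true)))
      exact ⟨Or.inr rfl, this, by rw [hz]; norm_num⟩
  · rintro ⟨δ, hδ⟩
    set b : Fin (Nat.clog 2 n) → Bool := fun k => if δ k = 0 then true else false with hbdef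
    -- key pointwise property for support points
    have key : ∀ i : Fin (n+1), lam i ≠ 0 →
        ∀ k, b k = η (i : ℕ) k ∨ b k = η ((i : ℕ) + 1) k := by
      intro i hi k
      obtain ⟨hbin, hlo, hhi⟩ := hδ k
      have hpos : 0 < lam i := lt_of_le_of_ne (hnn i) (Ne.symm hi)
      rcases hbin with h0' | h1'
      · have hbt : b k = true := by simp [hbdef, h0']
        by_contra hcon
        push_neg at hcon
        obtain ⟨ha, hb'⟩ := hcon
        rw [hbt] at ha hb'
        have ha' : η (i : ℕ) k = false := by
          revert ha; cases η (i : ℕ) k <;> simp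
        have hb'' : η ((i : ℕ) + 1) k = false := by
          revert hb'; cases η ((i : ℕ) + 1) k <;> simp
        have hmem : i ∈ Finset.univ.filter
            (fun j : Fin (n+1) => ¬(η (j : ℕ) k = true ∨ η ((j : ℕ) + 1) k = true)) := by
          simp [ha', hb'']
        have := Finset.single_le_sum (fun i _ => hnn i) hmem
        rw [h0'] at hlo
        linarith
      · have hne0 : δ k ≠ 0 := by rw [h1']; norm_num
        have hbf : b k = false := by simp [hbdef, hne0]
        by_contra hcon
        push_neg at hcon
        obtain ⟨ha, hb'⟩ := hcon
        rw [hbf] at ha hb'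
        have ha' : η (i : ℕ) k = true := by
          revert ha; cases η (i : ℕ) k <;> simp
        have hb'' : η ((i : ℕ) + 1) k = true := by
          revert hb'; cases η ((i : ℕ) + 1) k <;> simp
        have hmem : i ∈ Finset.univ.filter
            (fun j : Fin (n+1) => ¬(η (j : ℕ) k = false ∨ η ((j : ℕ) + 1) k = false)) := by
          simp [ha', hb'']
        have := Finset.single_le_sum (fun i _ => hnn i) hmem
        rw [h1'] at hhi
        linarith
    -- Gray property for all s ≤ n
    have hgray' : ∀ s : ℕ, s ≤ n → ∀ k k' : Fin (Nat.clog 2 n),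
        η s k ≠ η (s+1) k → η s k' ≠ η (s+1) k' → k = k' := by
      intro s hs k k' hk hk'
      rcases Nat.eq_zero_or_pos s with rfl | hs1
      · rw [h0] at hk; exact absurd rfl hk
      rcases eq_or_lt_of_le hs with rfl | hlt
      · rw [hend] at hk; exact absurd rfl hk
      · exact Finset.card_le_one.mp (hgray s hs1 hlt) k (by simp [hk]) k' (by simp [hk'])
    -- b equals one of the two adjacent codes, for support points
    have hbs : ∀ i : Fin (n+1), lam i ≠ 0 →
        b = η (i : ℕ) ∨ b = η ((i : ℕ) + 1) := by
      intro i hi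
      by_cases hcase : b = η (i : ℕ)
      · exact Or.inl hcase
      right
      obtain ⟨k0, hk0⟩ : ∃ k0, b k0 ≠ η (i : ℕ) k0 := by
        by_contra h; push_neg at h; exact hcase (funext h)
      have hbk0 : b k0 = η ((i : ℕ) + 1) k0 := (key i hi k0).resolve_left hk0
      have hd0 : η (i : ℕ) k0 ≠ η ((i : ℕ) + 1) k0 := fun h => hk0 (hbk0.trans h.symm)
      funext k
      rcases key i hi k with h | h
      · by_cases hd : η (i : ℕ) k = η ((i : ℕ) + 1) k
        · rw [h, hd]
        · have hkk0 : k = k0 := hgray' (i : ℕ) (by have := i.isLt; omega) k k0 hd hd0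
          rw [hkk0]; exact hbk0
      · exact h
    -- support is nonempty
    obtain ⟨i0, -, hi0⟩ := Finset.exists_ne_zero_of_sum_ne_zero
      (by rw [hsum]; norm_num : ∑ j, lam j ≠ (0:ℝ))
    -- find t with η t = b
    obtain ⟨t, ht1, htn, hηt⟩ : ∃ t, 1 ≤ t ∧ t ≤ n ∧ η t = b := by
      rcases hbs i0 hi0 with h | h
      · rcases Nat.eq_zero_or_pos (i0 : ℕ) with h0' | hp
        · rw [h0'] at h
          exact ⟨1, le_rfl, hn, by rw [← h0]; exact h.symm⟩
        · exact ⟨(i0 : ℕ), hp, by have := i0.isLt; omega, h.symm⟩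
      · rcases eq_or_lt_of_le (Nat.lt_succ_iff.mp i0.isLt) with he | hl
        · rw [he] at h
          exact ⟨n, hn, le_rfl, by rw [← hend]; exact h.symm⟩
        · exact ⟨(i0 : ℕ) + 1, by omega, by omega, h.symm⟩
    rw [hS]
    refine Set.mem_iUnion.mpr ⟨⟨t - 1, by omega⟩, ⟨by rw [hΛ]; exact ⟨hnn, hsum⟩, ?_⟩⟩
    intro k hk1 hk2
    by_contra hne
    have hcs : ((⟨t - 1, by omega⟩ : Fin n).castSucc : ℕ) = t - 1 := rfl
    have hsc : ((⟨t - 1, by omega⟩ : Fin n).succ : ℕ) = t - 1 + 1 := rfl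
    rcases hbs k hne with h | h
    · rcases Nat.eq_zero_or_pos (k : ℕ) with h0' | hp
      · rw [h0'] at h
        have h1t : (1:ℕ) = t := hdist 1 t le_rfl hn ht1 htn (by rw [hηt, ← h0]; exact h.symm)
        exact hk1 (Fin.ext (by rw [hcs]; omega))
      · have hkt : (k : ℕ) = t := hdist (k : ℕ) t hp (by have := k.isLt; omega) ht1 htn
          (by rw [hηt]; exact h.symm)
        exact hk2 (Fin.ext (by rw [hsc]; omega))
    · rcases eq_or_lt_of_le (Nat.lt_succ_iff.mp k.isLt) with he | hl
      · rw [he] at h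
        have hnt : n = t := hdist n t hn le_rfl ht1 htn (by rw [hηt, ← hend]; exact h.symm)
        exact hk2 (Fin.ext (by rw [hsc]; omega))
      · have hkt : (k : ℕ) + 1 = t := hdist ((k : ℕ) + 1) t (by omega) (by omega) ht1 htn
          (by rw [hηt]; exact h.symm)
        exact hk1 (Fin.ext (by rw [hcs]; omega))
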